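/- Let F(w) = ((k+1)!·(Q(λ) − Q(λ−w)) / ((−1)^k P^{(k)}(λ)))^{1/(k+1)} for w ≥ 0, where P is a polynomial with P(λ) = ... = P^{(k−1)}(λ) = 0 and (−1)^k P^{(k)}(λ) > 0, and Q is a primitive of P. Then F(w) = w + A₂w² + O(w³) as w → 0⁺, with A₂ = −P^{(k+1)}(λ)/((k+1)(k+2)P^{(k)}(λ)); in particular F is invertible near 0 with inverse G(s) = s + B₂s² + O(s³), B₂ = −A₂. -/

import Mathlib

open Asymptotics Polynomial Set Finset Real

lemma aux_rpow_bound {α : ℝ} (h0 : 0 < α) (h1 : α ≤ 1) {u : ℝ} (hu : |u| ≤ 1/2) :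
    |(1+u) ^ α - 1 - α*u| ≤ 4 * u^2 := by
  have habs : ∀ t : ℝ, |t| ≤ 1/2 → (1:ℝ)/2 ≤ 1 + t := by
    intro t ht; have := abs_le.1 ht; linarith [this.1]
  have hd : ∀ t : ℝ, (1:ℝ)/2 ≤ 1 + t →
      HasDerivAt (fun t : ℝ => (1+t) ^ (α-1)) ((α-1) * (1+t) ^ (α-2)) t := by
    intro t ht
    have h1t : (1+t) ≠ 0 := by positivity
    have h2 := (Real.hasDerivAt_rpow_const (x := 1+t) (p := α-1) (Or.inl h1t)).comp t
      ((hasDerivAt_id t).const_add 1)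
    have heq : ((fun x : ℝ => x ^ (α-1)) ∘ (fun t : ℝ => 1 + t)) = fun t : ℝ => (1+t) ^ (α-1) := by
      ext x; simp [Function.comp]
    rw [heq] at h2
    refine h2.congr_deriv ?_
    rw [mul_one]; ring_nf
  have hbound : ∀ t ∈ Icc (-(1/2):ℝ) (1/2), ‖(α-1) * (1+t) ^ (α-2)‖ ≤ 4 := by
    intro t ht
    have h2 : (1:ℝ)/2 ≤ 1 + t := habs t (abs_le.2 ⟨ht.1, ht.2⟩)
    have hp : (0:ℝ) < 1 + t := by linarith
    have hle : (1+t) ^ (α-2) ≤ ((1:ℝ)/2) ^ (α-2) :=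
      Real.rpow_le_rpow_of_nonpos (by norm_num) h2 (by linarith)
    have h4 : ((1:ℝ)/2) ^ (α-2) ≤ 4 := by
      have he : ((1:ℝ)/2) ^ (α-2) = (2:ℝ) ^ (2-α) := by
        rw [one_div, ← Real.rpow_neg_one, ← Real.rpow_mul (by norm_num : (0:ℝ) ≤ 2)]
        congr 1; ring
      rw [he]
      calc (2:ℝ) ^ (2-α) ≤ (2:ℝ) ^ (2:ℝ) :=
            Real.rpow_le_rpow_of_exponent_le (by norm_num) (by linarith)
        _ = 4 := by
            rw [show (2:ℝ) ^ (2:ℝ) = (2:ℝ) ^ ((2:ℕ):ℝ) by norm_num, Real.rpow_natCast]; norm_num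
    have hnn : (0:ℝ) ≤ (1+t) ^ (α-2) := Real.rpow_nonneg (le_of_lt hp) _
    rw [norm_mul, Real.norm_eq_abs, Real.norm_eq_abs, abs_of_nonneg hnn]
    have : |α - 1| ≤ 1 := by rw [abs_le]; constructor <;> linarith
    nlinarith [le_trans hle h4]
  have hMVT1 : ∀ t ∈ Icc (-(1/2):ℝ) (1/2), |(1+t) ^ (α-1) - 1| ≤ 4 * |t| := by
    intro t ht
    have := Convex.norm_image_sub_le_of_norm_hasDerivWithin_le
      (f := fun t : ℝ => (1+t) ^ (α-1)) (f' := fun t => (α-1) * (1+t) ^ (α-2)) (C := 4)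
      (fun x hx => (hd x (habs x (abs_le.2 ⟨hx.1, hx.2⟩))).hasDerivWithinAt)
      hbound (convex_Icc _ _) (x := 0) (y := t) (by norm_num) ht
    simpa [Real.norm_eq_abs] using this
  have hfd : ∀ t : ℝ, (1:ℝ)/2 ≤ 1 + t →
      HasDerivAt (fun t : ℝ => (1+t) ^ α - 1 - α*t) (α * ((1+t) ^ (α-1) - 1)) t := by
    intro t ht
    have h1t : (1+t) ≠ 0 := by positivity
    have h' := (Real.hasDerivAt_rpow_const (x := 1+t) (p := α) (Or.inl h1t)).comp t
      ((hasDerivAt_id t).const_add 1)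
    have heq : ((fun x : ℝ => x ^ α) ∘ (fun t : ℝ => 1 + t)) = fun t : ℝ => (1+t) ^ α := by
      ext x; simp [Function.comp]
    rw [heq] at h'
    have := ((h'.sub_const 1).sub ((hasDerivAt_id t).const_mul α))
    refine this.congr_deriv ?_
    ring
  have hsub : Icc (min 0 u) (max 0 u) ⊆ Icc (-(1/2):ℝ) (1/2) := by
    have hu' := abs_le.1 hu
    intro x hx; simp only [Set.mem_Icc] at *
    rcases hx with ⟨hx1, hx2⟩
    refine ⟨le_trans ?_ hx1, le_trans hx2 ?_⟩
    · apply le_min (by norm_num) (by linarith)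
    · apply max_le (by norm_num) (by linarith)
  have hbound2 : ∀ t ∈ Icc (min 0 u) (max 0 u), ‖α * ((1+t) ^ (α-1) - 1)‖ ≤ 4 * |u| := by
    intro t ht
    have ht' := hsub ht
    have hM := hMVT1 t ht'
    have htu : |t| ≤ |u| := by
      rcases ht with ⟨ht1, ht2⟩
      rw [abs_le]; constructor
      · exact le_trans (le_min (by simp [abs_nonneg, neg_nonpos]) (neg_abs_le u)) ht1
      · exact le_trans ht2 (max_le (abs_nonneg u) (le_abs_self u))
    rw [norm_mul, Real.norm_eq_abs, Real.norm_eq_abs, abs_of_pos h0]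
    calc α * |(1+t) ^ (α-1) - 1| ≤ 1 * (4 * |t|) := by
          apply mul_le_mul h1 hM (abs_nonneg _) (by norm_num)
      _ ≤ 4 * |u| := by nlinarith [abs_nonneg t]
  have hmem0 : (0:ℝ) ∈ Icc (min 0 u) (max 0 u) := ⟨min_le_left _ _, le_max_left _ _⟩
  have hmemu : u ∈ Icc (min 0 u) (max 0 u) := ⟨min_le_right _ _, le_max_right _ _⟩
  have := Convex.norm_image_sub_le_of_norm_hasDerivWithin_le
    (f := fun t : ℝ => (1+t) ^ α - 1 - α*t) (f' := fun t => α * ((1+t) ^ (α-1) - 1))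
    (C := 4 * |u|)
    (fun x hx => (hfd x (habs x (abs_le.2 ⟨(hsub hx).1, (hsub hx).2⟩))).hasDerivWithinAt)
    hbound2 (convex_Icc _ _) (x := 0) (y := u) hmem0 hmemu
  have h2 : |(1+u) ^ α - 1 - α*u| ≤ 4 * |u| * |u| := by simpa using this
  calc |(1+u) ^ α - 1 - α*u| ≤ 4 * |u| * |u| := h2
    _ = 4 * u^2 := by rw [mul_assoc, ← abs_mul, ← sq, abs_sq]



open Asymptotics in
lemma stmt16_conclude (F : ℝ → ℝ) (A₂ : ℝ)
    (C1 : ℝ) (hC10 : 0 < C1) (δ : ℝ) (hδ0 : 0 < δ) (hδ1 : δ ≤ 1)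
    (hFcont : ContinuousOn F (Set.Icc 0 δ))
    (hFmono : StrictMonoOn F (Set.Icc 0 δ))
    (hF0 : F 0 = 0)
    (hkey1 : ∀ w : ℝ, 0 < w → w ≤ δ → |F w - (w + A₂*w^2)| ≤ C1 * w^3)
    (hbnd : ∀ w : ℝ, 0 ≤ w → w ≤ δ → w/2 ≤ F w ∧ F w ≤ 2*w) :
    ((fun w => F w - (w + A₂ * w ^ 2)) =O[nhdsWithin 0 (Set.Ioi 0)] fun w => w ^ 3) ∧
    ∃ ε > (0:ℝ), ∃ G : ℝ → ℝ, (∀ w ∈ Set.Ico (0:ℝ) ε, G (F w) = w) ∧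
      ((fun s => G s - (s + (-A₂) * s ^ 2)) =O[nhdsWithin 0 (Set.Ioi 0)] fun s => s ^ 3) := by
  constructor
  · -- first conclusion
    rw [Asymptotics.isBigO_iff]
    refine ⟨C1, ?_⟩
    filter_upwards [Ioo_mem_nhdsGT_of_mem (Set.left_mem_Ico.2 hδ0)] with w hw
    rw [Real.norm_eq_abs, Real.norm_eq_abs]
    have h1 := hkey1 w hw.1 (le_of_lt hw.2)
    rw [abs_of_pos (pow_pos hw.1 3)]
    exact h1
  · -- inverse function
    set G : ℝ → ℝ := Function.invFunOn F (Set.Ico 0 δ) with hGdef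
    have hinj : Set.InjOn F (Set.Ico 0 δ) := hFmono.injOn.mono Set.Ico_subset_Icc_self
    have hGF : ∀ w ∈ Set.Ico (0:ℝ) δ, G (F w) = w := fun w hw => hinj.leftInvOn_invFunOn hw
    refine ⟨δ, hδ0, G, hGF, ?_⟩
    set s₀ : ℝ := F (δ/2) with hs₀def
    have hs₀ : 0 < s₀ := by
      have := (hbnd (δ/2) (by linarith) (by linarith)).1
      rw [hs₀def]
      linarith
    set C2 : ℝ := 12 * |A₂| * (|A₂| + C1) + 8*C1 with hC2def
    have hkey2 : ∀ s : ℝ, 0 < s → s < s₀ → |G s - (s + (-A₂)*s^2)| ≤ C2 * s^3 := by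
      intro s hs0 hss
      have hIVT := intermediate_value_Icc (by linarith : (0:ℝ) ≤ δ/2)
        (hFcont.mono (Set.Icc_subset_Icc le_rfl (by linarith)))
      have hsmem : s ∈ Set.Icc (F 0) (F (δ/2)) := by
        rw [hF0]
        exact ⟨le_of_lt hs0, le_of_lt hss⟩
      obtain ⟨w, hwmem, hFws⟩ := hIVT hsmem
      have hwδ2 : w ≤ δ/2 := hwmem.2
      have hwδ : w ≤ δ := by linarith
      have wpos : 0 < w := by
        rcases eq_or_lt_of_le hwmem.1 with h|h
        · exfalso
          rw [← h, hF0] at hFws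
          linarith
        · exact h
      have hw1 : w ≤ 1 := le_trans hwδ hδ1
      have hGs : G s = w := by
        rw [← hFws]
        exact hGF w ⟨le_of_lt wpos, by linarith⟩
      have hb := hbnd w (le_of_lt wpos) hwδ
      have hw2s : w ≤ 2*s := by
        have := hb.1
        rw [hFws] at this
        linarith
      set e : ℝ := F w - (w + A₂*w^2) with hedef
      have he : |e| ≤ C1*w^3 := hkey1 w wpos hwδ
      have hs : s = w + A₂*w^2 + e := by
        rw [hedef, ← hFws]
        ring
      have h9 : w - (s + (-A₂)*s^2) = A₂*(s-w)*(s+w) - e := by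
        rw [hs]; ring
      have hswb : |s - w| ≤ (|A₂| + C1)*w^2 := by
        have h10 : s - w = A₂*w^2 + e := by rw [hs]; ring
        rw [h10]
        calc |A₂*w^2 + e| ≤ |A₂*w^2| + |e| := abs_add_le _ _
          _ ≤ |A₂| * w^2 + C1*w^3 := by
              rw [abs_mul, abs_of_nonneg (by positivity : (0:ℝ) ≤ w^2)]
              linarith
          _ ≤ (|A₂| + C1)*w^2 := by
              have : w^3 ≤ w^2 := by nlinarith
              nlinarith [hC10]
      have hsum : |s + w| ≤ 3*s := by
        rw [abs_of_pos (by linarith)]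
        linarith
      have t2 : w^2 ≤ 4*s^2 := by nlinarith
      have t3 : w^3 ≤ 8*s^3 := by nlinarith
      rw [hGs, h9]
      calc |A₂*(s-w)*(s+w) - e| ≤ |A₂*(s-w)*(s+w)| + |e| := abs_sub _ _
        _ = |A₂| * |s-w| * |s+w| + |e| := by rw [abs_mul, abs_mul]
        _ ≤ |A₂| * ((|A₂| + C1)*w^2)*(3*s) + C1*w^3 := by
            apply add_le_add _ he
            apply mul_le_mul _ hsum (abs_nonneg _) (by positivity)
            exact mul_le_mul_of_nonneg_left hswb (abs_nonneg _)
        _ ≤ C2*s^3 := by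
            rw [hC2def]
            nlinarith [mul_le_mul_of_nonneg_right t2 (le_of_lt hs0), t3,
              mul_nonneg (abs_nonneg A₂) (add_nonneg (abs_nonneg A₂) (le_of_lt hC10)),
              abs_nonneg A₂, hC10, hs0]
    rw [Asymptotics.isBigO_iff]
    refine ⟨C2, ?_⟩
    filter_upwards [Ioo_mem_nhdsGT_of_mem (Set.left_mem_Ico.2 hs₀)] with sx hsx
    rw [Real.norm_eq_abs, Real.norm_eq_abs]
    rw [abs_of_pos (pow_pos hsx.1 3)]
    exact hkey2 sx hsx.1 hsx.2


set_option maxHeartbeats 1000000 in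
/-- Expansion of F(w) = ((k+1)!(Q(λ)−Q(λ−w))/((−1)^k P^{(k)}(λ)))^{1/(k+1)}:
F(w) = w + A₂w² + O(w³) as w → 0⁺ with A₂ = −P^{(k+1)}(λ)/((k+1)(k+2)P^{(k)}(λ)),
and F is invertible near 0 with inverse G(s) = s + B₂s² + O(s³), B₂ = −A₂. -/
theorem stmt_16 (k : ℕ) (lam : ℝ) (P : Polynomial ℝ) (Q F : ℝ → ℝ)
    (hvanish : ∀ j < k, ((Polynomial.derivative^[j]) P).eval lam = 0)
    (hk : 0 < (-1 : ℝ) ^ k * ((Polynomial.derivative^[k]) P).eval lam)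
    (hQ : ∀ y, HasDerivAt Q (P.eval y) y)
    (hF : ∀ w ≥ (0:ℝ), F w
      = (((k + 1).factorial : ℝ) * (Q lam - Q (lam - w))
          / ((-1 : ℝ) ^ k * ((Polynomial.derivative^[k]) P).eval lam)) ^ ((1 : ℝ) / (k + 1))) :
    let A₂ : ℝ := -((Polynomial.derivative^[k + 1]) P).eval lam
        / (((k : ℝ) + 1) * ((k : ℝ) + 2) * ((Polynomial.derivative^[k]) P).eval lam)
    ((fun w => F w - (w + A₂ * w ^ 2)) =O[nhdsWithin 0 (Set.Ioi 0)] fun w => w ^ 3) ∧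
    ∃ ε > (0:ℝ), ∃ G : ℝ → ℝ, (∀ w ∈ Set.Ico (0:ℝ) ε, G (F w) = w) ∧
      ((fun s => G s - (s + (-A₂) * s ^ 2)) =O[nhdsWithin 0 (Set.Ioi 0)] fun s => s ^ 3) := by
  intro A₂
  set S : Polynomial ℝ := P.comp (Polynomial.C lam - Polynomial.X) with hS
  have hqd : Polynomial.derivative (Polynomial.C lam - Polynomial.X : Polynomial ℝ)
      = Polynomial.C (-1 : ℝ) := by simp
  have hSit : ∀ j, Polynomial.derivative^[j] S
      = Polynomial.C ((-1:ℝ)^j) * ((Polynomial.derivative^[j] P).comp (Polynomial.C lam - Polynomial.X)) := by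
    intro j
    induction j with
    | zero => simp [hS]
    | succ j ih =>
      rw [Function.iterate_succ_apply', ih, Polynomial.derivative_C_mul,
        Polynomial.derivative_comp, hqd, Function.iterate_succ_apply']
      rw [← mul_assoc, ← Polynomial.C_mul]
      congr 2
  have hSeval : ∀ w : ℝ, S.eval w = P.eval (lam - w) := by
    intro w; rw [hS, Polynomial.eval_comp]; simp
  have hcoeff : ∀ j, (j.factorial : ℝ) * S.coeff j
      = (-1:ℝ)^j * ((Polynomial.derivative^[j]) P).eval lam := by
    intro j
    have h1 : (Polynomial.derivative^[j] S).coeff 0 = (j.factorial : ℝ) * S.coeff j := by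
      rw [Polynomial.coeff_iterate_derivative]
      simp [Nat.descFactorial_self, nsmul_eq_mul]
    have h2 : (Polynomial.derivative^[j] S).coeff 0
        = (-1:ℝ)^j * ((Polynomial.derivative^[j]) P).eval lam := by
      rw [Polynomial.coeff_zero_eq_eval_zero, hSit j]
      simp [Polynomial.eval_comp]
    rw [← h1, h2]
  set D : ℝ := (-1 : ℝ) ^ k * ((Polynomial.derivative^[k]) P).eval lam with hD
  set M : ℕ := max (S.natDegree + 1) (k + 3) with hM
  have hMdeg : S.natDegree < M := lt_of_lt_of_le (Nat.lt_succ_self _) (le_max_left _ _)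
  have hMk : k + 3 ≤ M := le_max_right _ _
  set R : ℝ → ℝ := fun w => ∑ j ∈ Finset.range M, S.coeff j / ((j:ℝ)+1) * w^(j+1) with hR
  have hRd : ∀ w, HasDerivAt R (S.eval w) w := by
    intro w
    have h1 : HasDerivAt R (∑ j ∈ Finset.range M, S.coeff j * w^j) w := by
      apply HasDerivAt.fun_sum
      intro j _
      have h2 : HasDerivAt (fun w : ℝ => w^(j+1)) (((j:ℝ)+1)*w^j) w := by
        simpa using hasDerivAt_pow (j+1) w
      have := h2.const_mul (S.coeff j / ((j:ℝ)+1))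
      refine this.congr_deriv ?_
      have : ((j:ℝ)+1) ≠ 0 := by positivity
      field_simp
    rwa [← Polynomial.eval_eq_sum_range' hMdeg] at h1
  have hQR : ∀ w, Q lam - Q (lam - w) = R w := by
    have hdiff : ∀ w, HasDerivAt (fun w => Q lam - Q (lam - w) - R w) 0 w := by
      intro w
      have hlin : HasDerivAt (fun x : ℝ => lam - x) (-1:ℝ) w := by
        simpa using (hasDerivAt_id w).const_sub lam
      have h1 : HasDerivAt (fun w : ℝ => Q (lam - w)) (P.eval (lam - w) * (-1)) w := by
        have := (hQ (lam - w)).comp w hlin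
        exact this
      have := ((hasDerivAt_const w (Q lam)).sub h1).sub (hRd w)
      refine this.congr_deriv ?_
      rw [hSeval w]; ring
    intro w
    have hc : ∀ x y : ℝ, (fun w => Q lam - Q (lam - w) - R w) x = (fun w => Q lam - Q (lam - w) - R w) y :=
      is_const_of_deriv_eq_zero (fun x => (hdiff x).differentiableAt)
        (fun x => (hdiff x).deriv)
    have h0 : (fun w => Q lam - Q (lam - w) - R w) 0 = 0 := by
      simp only [hR, sub_zero, sub_eq_zero, sub_self]
      rw [Finset.sum_eq_zero]
      intro j _
      rw [zero_pow (by omega : j+1 ≠ 0), mul_zero]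
    have := hc w 0
    rw [h0] at this
    simpa [sub_eq_zero] using this
  -- coefficient facts
  have hfac : ∀ j : ℕ, ((j.factorial : ℝ)) ≠ 0 := fun j => Nat.cast_ne_zero.2 (Nat.factorial_ne_zero j)
  have hcz : ∀ j < k, S.coeff j = 0 := by
    intro j hj
    have := hcoeff j
    rw [hvanish j hj, mul_zero] at this
    exact (mul_eq_zero.1 this).resolve_left (hfac j)
  have hck : (k.factorial : ℝ) * S.coeff k = D := by
    rw [hcoeff k, hD]
  -- split R
  set ρ : ℝ → ℝ := fun w => ∑ i ∈ Finset.range (M-(k+2)), S.coeff (k+2+i) / ((k:ℝ)+3+i) * w^i with hρdef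
  have hRw : ∀ w : ℝ, R w = S.coeff k/((k:ℝ)+1) * w^(k+1) + S.coeff (k+1)/((k:ℝ)+2) * w^(k+2) + w^(k+3) * ρ w := by
    intro w
    simp only [hR]
    have hsplit : Finset.range M = Finset.range (k+2) ∪ Finset.Ico (k+2) M := by
      rw [Finset.range_eq_Ico, Finset.range_eq_Ico, Finset.Ico_union_Ico_eq_Ico (Nat.zero_le _) (by omega)]
    rw [hsplit, Finset.sum_union (by
      rw [Finset.range_eq_Ico]; exact Finset.Ico_disjoint_Ico_consecutive 0 (k+2) M)]
    have h1 : ∑ j ∈ Finset.range (k+2), S.coeff j / ((j:ℝ)+1) * w^(j+1)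
        = S.coeff k/((k:ℝ)+1) * w^(k+1) + S.coeff (k+1)/((k:ℝ)+2) * w^(k+2) := by
      rw [Finset.sum_range_succ, Finset.sum_range_succ]
      rw [Finset.sum_eq_zero (fun j hj => by rw [hcz j (Finset.mem_range.1 hj)]; ring)]
      push_cast; ring
    have h2 : ∑ j ∈ Finset.Ico (k+2) M, S.coeff j / ((j:ℝ)+1) * w^(j+1) = w^(k+3) * ρ w := by
      rw [Finset.sum_Ico_eq_sum_range, hρdef, Finset.mul_sum]
      apply Finset.sum_congr rfl
      intro i _
      have he : k+2+i+1 = k+3+i := by omega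
      rw [he, pow_add w (k+3) i]
      push_cast
      ring
    rw [h1, h2]
  -- split S.eval
  set θ : ℝ → ℝ := fun w => ∑ i ∈ Finset.range (M-(k+1)), S.coeff (k+1+i) * w^i with hθdef
  have hSw : ∀ w : ℝ, S.eval w = S.coeff k * w^k + w^(k+1) * θ w := by
    intro w
    rw [Polynomial.eval_eq_sum_range' hMdeg]
    have hsplit : Finset.range M = Finset.range (k+1) ∪ Finset.Ico (k+1) M := by
      rw [Finset.range_eq_Ico, Finset.range_eq_Ico, Finset.Ico_union_Ico_eq_Ico (Nat.zero_le _) (by omega)]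
    rw [hsplit, Finset.sum_union (by
      rw [Finset.range_eq_Ico]; exact Finset.Ico_disjoint_Ico_consecutive 0 (k+1) M)]
    have h1 : ∑ j ∈ Finset.range (k+1), S.coeff j * w^j = S.coeff k * w^k := by
      rw [Finset.sum_range_succ]
      rw [Finset.sum_eq_zero (fun j hj => by rw [hcz j (Finset.mem_range.1 hj)]; ring)]
      ring
    have h2 : ∑ j ∈ Finset.Ico (k+1) M, S.coeff j * w^j = w^(k+1) * θ w := by
      rw [Finset.sum_Ico_eq_sum_range, hθdef, Finset.mul_sum]
      apply Finset.sum_congr rfl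
      intro i _
      rw [pow_add w (k+1) i]
      ring
    rw [h1, h2]
  -- bounds on ρ and θ
  set Cρ : ℝ := ∑ i ∈ Finset.range (M-(k+2)), |S.coeff (k+2+i) / ((k:ℝ)+3+i)| with hCρ
  have hρb : ∀ w : ℝ, |w| ≤ 1 → |ρ w| ≤ Cρ := by
    intro w hw
    calc |ρ w| ≤ ∑ i ∈ Finset.range (M-(k+2)), |S.coeff (k+2+i) / ((k:ℝ)+3+i) * w^i| :=
          Finset.abs_sum_le_sum_abs _ _
      _ ≤ Cρ := by
          apply Finset.sum_le_sum
          intro i _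
          rw [abs_mul, abs_pow]
          nlinarith [abs_nonneg (S.coeff (k+2+i) / ((k:ℝ)+3+i)), pow_le_one₀ (abs_nonneg w) hw (n := i), pow_nonneg (abs_nonneg w) i]
  set Cθ : ℝ := ∑ i ∈ Finset.range (M-(k+1)), |S.coeff (k+1+i)| with hCθ
  have hθb : ∀ w : ℝ, |w| ≤ 1 → |θ w| ≤ Cθ := by
    intro w hw
    calc |θ w| ≤ ∑ i ∈ Finset.range (M-(k+1)), |S.coeff (k+1+i) * w^i| :=
          Finset.abs_sum_le_sum_abs _ _
      _ ≤ Cθ := by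
          apply Finset.sum_le_sum
          intro i _
          rw [abs_mul, abs_pow]
          nlinarith [abs_nonneg (S.coeff (k+1+i)), pow_le_one₀ (abs_nonneg w) hw (n := i), pow_nonneg (abs_nonneg w) i]
  -- analytic constants
  have hD0 : D ≠ 0 := ne_of_gt hk
  set α : ℝ := (1:ℝ)/((k:ℝ)+1) with hαdef
  have hk1 : ((k:ℝ)+1) ≠ 0 := by positivity
  have hα0 : 0 < α := by rw [hαdef]; positivity
  have hα1 : α ≤ 1 := by
    rw [hαdef, div_le_one (by positivity)]
    have : (0:ℝ) ≤ (k:ℝ) := Nat.cast_nonneg k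
    linarith
  set a : ℝ := (((k+1).factorial : ℝ) * S.coeff (k+1)) / (((k:ℝ)+2) * D) with hadef
  set ψ : ℝ → ℝ := fun w => ((k+1).factorial : ℝ) * ρ w / D with hψdef
  set H : ℝ → ℝ := fun w => ((k+1).factorial : ℝ) * R w / D with hHdef
  have e1 : ((k+1).factorial : ℝ) * (S.coeff k/((k:ℝ)+1)) / D = 1 := by
    have hfs : ((k+1).factorial : ℝ) = ((k:ℝ)+1) * (k.factorial:ℝ) := by
      rw [Nat.factorial_succ]; push_cast; ring
    rw [hfs]
    have h6 : ((k:ℝ)+1) * (k.factorial:ℝ) * (S.coeff k/((k:ℝ)+1)) = (k.factorial:ℝ)*S.coeff k := by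
      field_simp
    rw [h6, hck, div_self hD0]
  have hH : ∀ w : ℝ, H w = w^(k+1) * (1 + a*w + w^2 * ψ w) := by
    intro w
    have h3 : H w = (((k+1).factorial : ℝ) * (S.coeff k/((k:ℝ)+1)) / D) * w^(k+1)
        + a * (w^(k+1)*w) + (w^(k+1)*w^2) * ψ w := by
      simp only [hHdef, hψdef, hadef]
      rw [hRw w]
      have h4 : w^(k+2) = w^(k+1)*w := by ring
      have h5 : w^(k+3) = w^(k+1)*w^2 := by ring
      rw [h4, h5]
      field_simp
    rw [h3, e1]; ring
  have hFH : ∀ w : ℝ, 0 ≤ w → F w = (H w) ^ α := by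
    intro w hw
    rw [hF w hw, hQR w]
  have hA2a : A₂ = α * a := by
    have hPk0 : ((Polynomial.derivative^[k]) P).eval lam ≠ 0 := by
      intro h
      rw [hD, h, mul_zero] at hk
      exact lt_irrefl 0 hk
    have hm1 : ((-1:ℝ)^k) ≠ 0 := pow_ne_zero _ (by norm_num)
    have ha2 : a = ((-1:ℝ)^(k+1) * ((Polynomial.derivative^[k+1]) P).eval lam)
        / (((k:ℝ)+2) * D) := by
      rw [hadef, hcoeff (k+1)]
    show -((Polynomial.derivative^[k + 1]) P).eval lam
        / (((k : ℝ) + 1) * ((k : ℝ) + 2) * ((Polynomial.derivative^[k]) P).eval lam) = α * a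
    rw [ha2, hαdef, hD, pow_succ]
    have hk2 : ((k:ℝ)+2) ≠ 0 := by positivity
    field_simp
  have hCρ0 : 0 ≤ Cρ := Finset.sum_nonneg (fun i _ => abs_nonneg _)
  have hCθ0 : 0 ≤ Cθ := Finset.sum_nonneg (fun i _ => abs_nonneg _)
  set Cψ : ℝ := ((k+1).factorial : ℝ) * Cρ / D with hCψdef
  have hCψ0 : 0 ≤ Cψ := by
    rw [hCψdef]
    apply div_nonneg _ (le_of_lt hk)
    positivity
  have hψb : ∀ w : ℝ, |w| ≤ 1 → |ψ w| ≤ Cψ := by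
    intro w hw
    have h1 := hρb w hw
    have h2 : |ψ w| = ((k+1).factorial : ℝ) * |ρ w| / D := by
      rw [hψdef]
      simp only []
      rw [abs_div, abs_mul, abs_of_pos hk,
        abs_of_nonneg (by positivity : (0:ℝ) ≤ ((k+1).factorial : ℝ))]
    rw [h2, hCψdef]
    gcongr
  set B : ℝ := |a| + Cψ + 1 with hBdef
  have hB0 : 0 < B := by positivity
  have hB1 : 1 ≤ B := by
    rw [hBdef]
    nlinarith [abs_nonneg a, hCψ0]
  have hckpos : 0 < S.coeff k := by
    have h1 : (0:ℝ) < (k.factorial : ℝ) := by positivity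
    by_contra hcon
    push_neg at hcon
    have h2 : (k.factorial : ℝ) * S.coeff k ≤ 0 := mul_nonpos_of_nonneg_of_nonpos (le_of_lt h1) hcon
    rw [hck] at h2
    exact absurd hk (not_lt.2 h2)
  set δ : ℝ := min 1 (min (1/(2*B)) (S.coeff k / (2*(Cθ+1)))) with hδdef
  have hδ0 : 0 < δ := by
    apply lt_min (by norm_num)
    apply lt_min (by positivity) (by positivity)
  have hδ1 : δ ≤ 1 := min_le_left _ _
  have hδB : δ ≤ 1/(2*B) := le_trans (min_le_right _ _) (min_le_left _ _)
  have hδθ : δ ≤ S.coeff k/(2*(Cθ+1)) := le_trans (min_le_right _ _) (min_le_right _ _)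
  -- bound on u
  have hub : ∀ w : ℝ, 0 ≤ w → w ≤ δ →
      |a*w + w^2*ψ w| ≤ B*w ∧ |a*w + w^2*ψ w| ≤ 1/2 := by
    intro w hw0 hwδ
    have hw1 : w ≤ 1 := le_trans hwδ hδ1
    have habsw : |w| ≤ 1 := by rw [abs_of_nonneg hw0]; exact hw1
    have hψw := hψb w habsw
    have h1 : |a*w + w^2*ψ w| ≤ |a| * w + w^2 * |ψ w| := by
      calc |a*w + w^2*ψ w| ≤ |a*w| + |w^2*ψ w| := abs_add_le _ _
        _ = |a| * w + w^2 * |ψ w| := by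
            rw [abs_mul, abs_mul, abs_of_nonneg hw0, abs_of_nonneg (by positivity : (0:ℝ) ≤ w^2)]
    have h2 : |a| * w + w^2 * |ψ w| ≤ B*w := by
      rw [hBdef]
      have t0 : w^2 ≤ w := by nlinarith
      have t1 : w^2 * |ψ w| ≤ w * Cψ := mul_le_mul t0 hψw (abs_nonneg _) hw0
      nlinarith [t1]
    refine ⟨le_trans h1 h2, le_trans (le_trans h1 h2) ?_⟩
    have hBne : B ≠ 0 := ne_of_gt hB0
    calc B*w ≤ B*(1/(2*B)) := by
          apply mul_le_mul_of_nonneg_left (le_trans hwδ hδB) (le_of_lt hB0)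
      _ = 1/2 := by field_simp
  -- main formula F w = w * (1+u)^α for 0 < w ≤ δ
  have hFform : ∀ w : ℝ, 0 < w → w ≤ δ →
      F w = w * (1 + (a*w + w^2*ψ w)) ^ α := by
    intro w hw0 hwδ
    have hu := hub w (le_of_lt hw0) hwδ
    have hm : (0:ℝ) ≤ 1 + (a*w + w^2*ψ w) := by
      have := abs_le.1 hu.2
      linarith [this.1]
    rw [hFH w (le_of_lt hw0), hH w]
    have heq : (w^(k+1) : ℝ) ^ α = w := by
      rw [← Real.rpow_natCast w (k+1), ← Real.rpow_mul (le_of_lt hw0)]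
      have : ((k+1 : ℕ) : ℝ) * α = 1 := by
        rw [hαdef]; push_cast; field_simp
      rw [this, Real.rpow_one]
    have h7 : 1 + a*w + w^2*ψ w = 1 + (a*w + w^2*ψ w) := by ring
    rw [h7, Real.mul_rpow (by positivity) hm, heq]
  set C1 : ℝ := 4*B^2 + Cψ with hC1def
  have hC10 : 0 < C1 := by positivity
  have hkey1 : ∀ w : ℝ, 0 < w → w ≤ δ → |F w - (w + A₂*w^2)| ≤ C1 * w^3 := by
    intro w hw0 hwδ
    have hu := hub w (le_of_lt hw0) hwδ
    set u : ℝ := a*w + w^2*ψ w with hudef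
    have hw1 : w ≤ 1 := le_trans hwδ hδ1
    have habsw : |w| ≤ 1 := by rw [abs_of_nonneg (le_of_lt hw0)]; exact hw1
    have hψw := hψb w habsw
    have hg := aux_rpow_bound hα0 hα1 hu.2
    have hiden : F w - (w + A₂*w^2) = w * ((1+u)^α - 1 - α*u) + α*w^3*ψ w := by
      rw [hFform w hw0 hwδ, hA2a, hudef]
      ring
    rw [hiden]
    calc |w * ((1+u)^α - 1 - α*u) + α*w^3*ψ w|
        ≤ |w * ((1+u)^α - 1 - α*u)| + |α*w^3*ψ w| := abs_add_le _ _
      _ ≤ w * (4*u^2) + α*w^3*Cψ := by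
          apply add_le_add
          · rw [abs_mul, abs_of_nonneg (le_of_lt hw0)]
            exact mul_le_mul_of_nonneg_left hg (le_of_lt hw0)
          · rw [abs_mul, abs_mul, abs_of_pos hα0, abs_of_nonneg (by positivity : (0:ℝ) ≤ w^3)]
            apply mul_le_mul_of_nonneg_left hψw (by positivity)
      _ ≤ 4*B^2*w^3 + w^3*Cψ := by
          apply add_le_add
          · have h8 : u^2 ≤ B^2*w^2 := by
              rw [← sq_abs u]
              calc |u|^2 ≤ (B*w)^2 := by
                    apply pow_le_pow_left₀ (abs_nonneg u) hu.1
                _ = B^2*w^2 := by ring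
            calc w*(4*u^2) ≤ w*(4*(B^2*w^2)) := by
                  apply mul_le_mul_of_nonneg_left (by linarith) (le_of_lt hw0)
              _ = 4*B^2*w^3 := by ring
          · have t4 : 0 ≤ (1-α) * w^3 * Cψ :=
              mul_nonneg (mul_nonneg (by linarith : (0:ℝ) ≤ 1-α)
                (by positivity : (0:ℝ) ≤ w^3)) hCψ0
            nlinarith [t4]
      _ = C1*w^3 := by rw [hC1def]; ring
  -- two-sided bounds
  have hbnd : ∀ w : ℝ, 0 ≤ w → w ≤ δ → w/2 ≤ F w ∧ F w ≤ 2*w := by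
    intro w hw0 hwδ
    rcases eq_or_lt_of_le hw0 with h|h
    · have hF0 : F 0 = 0 := by
        rw [hFH 0 le_rfl, hH 0]
        rw [zero_pow (by omega : k+1 ≠ 0), zero_mul, Real.zero_rpow (ne_of_gt hα0)]
      rw [← h, hF0]; norm_num
    · have hu := hub w (le_of_lt h) hwδ
      set u : ℝ := a*w + w^2*ψ w with hudef
      have hua := abs_le.1 hu.2
      have hm12 : (1:ℝ)/2 ≤ 1 + u := by linarith [hua.1]
      have hm32 : 1 + u ≤ 3/2 := by linarith [hua.2]
      rw [hFform w h hwδ]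
      constructor
      · have h1 : ((1:ℝ)/2) ≤ (1+u)^α := by
          calc ((1:ℝ)/2) = ((1:ℝ)/2)^(1:ℝ) := by rw [Real.rpow_one]
            _ ≤ ((1:ℝ)/2)^α := Real.rpow_le_rpow_of_exponent_ge (by norm_num) (by norm_num) hα1
            _ ≤ (1+u)^α := Real.rpow_le_rpow (by norm_num) hm12 (le_of_lt hα0)
        have := mul_le_mul_of_nonneg_left h1 (le_of_lt h)
        linarith
      · have h2 : (1+u)^α ≤ 2 := by
          calc (1+u)^α ≤ ((3:ℝ)/2)^α := Real.rpow_le_rpow (by linarith) hm32 (le_of_lt hα0)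
            _ ≤ ((3:ℝ)/2)^(1:ℝ) := Real.rpow_le_rpow_of_exponent_le (by norm_num) hα1
            _ = 3/2 := Real.rpow_one _
            _ ≤ 2 := by norm_num
        have := mul_le_mul_of_nonneg_left h2 (le_of_lt h)
        linarith
  -- F 0 = 0
  have hR0 : R 0 = 0 := by
    simp only [hR]
    apply Finset.sum_eq_zero
    intro j _
    rw [zero_pow (by omega : j+1 ≠ 0), mul_zero]
  have hH0 : H 0 = 0 := by
    simp only [hHdef]
    rw [hR0, mul_zero, zero_div]
  have hF0 : F 0 = 0 := by
    rw [hFH 0 le_rfl, hH0, Real.zero_rpow (ne_of_gt hα0)]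
  -- positivity of S.eval on (0, δ]
  have hSpos : ∀ w : ℝ, 0 < w → w ≤ δ → 0 < S.eval w := by
    intro w hw0 hwδ
    have hw1 : w ≤ 1 := le_trans hwδ hδ1
    have habsw : |w| ≤ 1 := by rw [abs_of_pos hw0]; exact hw1
    have hwk : 0 < w^k := pow_pos hw0 k
    have hwc : Cθ * w ≤ S.coeff k / 2 := by
      have h0 : Cθ * w ≤ Cθ * (S.coeff k/(2*(Cθ+1))) :=
        mul_le_mul_of_nonneg_left (le_trans hwδ hδθ) hCθ0
      have hkey : Cθ * (S.coeff k/(2*(Cθ+1))) = (Cθ/(Cθ+1)) * (S.coeff k/2) := by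
        field_simp
        try ring
        try tauto
      have hq : Cθ/(Cθ+1) ≤ 1 := by
        rw [div_le_one (by positivity)]; linarith
      have h5 : (Cθ/(Cθ+1)) * (S.coeff k/2) ≤ 1 * (S.coeff k/2) :=
        mul_le_mul_of_nonneg_right hq (by positivity)
      rw [hkey] at h0
      linarith
    have h2 : -Cθ ≤ θ w := (abs_le.1 (hθb w habsw)).1
    have h3 : -(w^(k+1)*Cθ) ≤ w^(k+1)*θ w := by
      have := mul_le_mul_of_nonneg_left h2 (pow_nonneg (le_of_lt hw0) (k+1))
      rw [mul_neg] at this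
      exact this
    have h5' : w^(k+1)*Cθ ≤ w^k*(S.coeff k/2) := by
      calc w^(k+1)*Cθ = w^k*(Cθ*w) := by ring
        _ ≤ w^k*(S.coeff k/2) := mul_le_mul_of_nonneg_left hwc (pow_nonneg (le_of_lt hw0) k)
    have h6 : 0 < w^k * S.coeff k := mul_pos hwk hckpos
    rw [hSw w]
    nlinarith [h3, h5', h6]
  -- strict monotonicity
  have hRc : Continuous R := by
    rw [hR]
    apply continuous_finset_sum
    intro i _
    exact (continuous_const.mul (continuous_pow (i+1)))
  have hHc : Continuous H := by
    rw [hHdef]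
    exact (continuous_const.mul hRc).div_const D
  have hHd : ∀ w : ℝ, HasDerivAt H (((k+1).factorial : ℝ) * S.eval w / D) w := by
    intro w
    exact ((hRd w).const_mul _).div_const D
  have hHmono : StrictMonoOn H (Set.Icc 0 δ) := by
    apply strictMonoOn_of_deriv_pos (convex_Icc _ _) hHc.continuousOn
    intro x hx
    rw [interior_Icc] at hx
    rw [(hHd x).deriv]
    exact div_pos (mul_pos (by positivity) (hSpos x hx.1 (le_of_lt hx.2))) hk
  have hFmono : StrictMonoOn F (Set.Icc 0 δ) := by
    intro x hx y hy hxy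
    have hmem0 : (0:ℝ) ∈ Set.Icc 0 δ := ⟨le_rfl, le_of_lt hδ0⟩
    have hHx : 0 ≤ H x := by
      have := hHmono.monotoneOn hmem0 hx hx.1
      rw [hH0] at this
      exact this
    rw [hFH x hx.1, hFH y hy.1]
    exact Real.rpow_lt_rpow hHx (hHmono hx hy hxy) hα0
  have hFcont : ContinuousOn F (Set.Icc 0 δ) := by
    apply ContinuousOn.congr
      (f := fun w => (H w) ^ α)
      (ContinuousOn.rpow_const hHc.continuousOn (fun x _ => Or.inr (le_of_lt hα0)))
    intro w hw
    exact hFH w hw.1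
  exact stmt16_conclude F A₂ C1 hC10 δ hδ0 hδ1 hFcont hFmono hF0 hkey1 hbnd
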